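/- Let (A_i)_{i∈I} be a finite family of unital associative ℂ-algebras, A = Π_{i∈I} A_i, and p ≥ 1. Let ω be a function assigning to each p-tuple (X_1,…,X_p) of derivations of A an element of A, which is antisymmetric (it changes sign under the transposition of any two arguments), additive in each argument, and satisfies ω(X_1,…,f•X_k,…,X_p) = f·ω(X_1,…,X_p) for every central element f ∈ Z(A) and every slot k, where f•X denotes the derivation a ↦ f·X(a). Then for every i ∈ I there exists a function ω_i on p-tuples of derivations of A_i, antisymmetric, additive in each argument, and satisfying ω_i(…, g•Y, …) = g·ω_i(…, Y, …) for every g ∈ Z(A_i), such that (ω(X_1,…,X_p))_i = ω_i((X_1)_i,…,(X_p)_i) for all derivations X_1,…,X_p of A, where (X)_i denotes the i-th component derivation of X, characterized by (X(a))_i = (X)_i(a_i) for all a ∈ A. -/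

import Mathlib

def IsNCDerivation {A : Type*} [Ring A] [Algebra ℂ A] (X : A →ₗ[ℂ] A) : Prop :=
  ∀ a b : A, X (a * b) = X a * b + a * X b

section aux
variable {I : Type*} [DecidableEq I] {A : I → Type*} [∀ i, Ring (A i)] [∀ i, Algebra ℂ (A i)]

/-- Lift a linear endomorphism of `A i` to one of the product, supported at `i`. -/
noncomputable def extD (i : I) (Y : A i →ₗ[ℂ] A i) :
    ((j : I) → A j) →ₗ[ℂ] ((j : I) → A j) where
  toFun a := Pi.single i (Y (a i))
  map_add' a b := by simp [Pi.single_add]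
  map_smul' c a := by simp [Pi.single_smul]

lemma extD_deriv (i : I) {Y : A i →ₗ[ℂ] A i} (hY : IsNCDerivation Y) :
    IsNCDerivation (extD i Y) := by
  intro a b
  funext j
  by_cases hj : j = i
  · subst hj
    simp [extD, hY (a j) (b j)]
  · simp [extD, Pi.single_eq_of_ne hj]

lemma mulLeft_comp_deriv {B : Type*} [Ring B] [Algebra ℂ B] {f : B} (hf : ∀ b, f * b = b * f)
    {X : B →ₗ[ℂ] B} (hX : IsNCDerivation X) :
    IsNCDerivation ((LinearMap.mulLeft ℂ f) ∘ₗ X) := by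
  intro a b
  simp only [LinearMap.comp_apply, LinearMap.mulLeft_apply, hX a b, mul_add]
  congr 1
  · rw [mul_assoc]
  · rw [← mul_assoc, hf a, mul_assoc]

end aux

theorem forms_pi_decomposition {I : Type*} [Fintype I] (A : I → Type*)
    [∀ i, Ring (A i)] [∀ i, Algebra ℂ (A i)] (p : ℕ) (hp : 1 ≤ p)
    (ω : (Fin p → (((i : I) → A i) →ₗ[ℂ] ((i : I) → A i))) → ((i : I) → A i))
    (hanti : ∀ (X : Fin p → (((i : I) → A i) →ₗ[ℂ] ((i : I) → A i))),
      (∀ k, IsNCDerivation (X k)) → ∀ k l : Fin p, k ≠ l →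
        ω (fun t => X (Equiv.swap k l t)) = - ω X)
    (hadd : ∀ (X : Fin p → (((i : I) → A i) →ₗ[ℂ] ((i : I) → A i))),
      (∀ k, IsNCDerivation (X k)) →
      ∀ (k : Fin p) (Y Z : ((i : I) → A i) →ₗ[ℂ] ((i : I) → A i)),
        IsNCDerivation Y → IsNCDerivation Z →
        ω (Function.update X k (Y + Z)) =
          ω (Function.update X k Y) + ω (Function.update X k Z))
    (hsmul : ∀ (X : Fin p → (((i : I) → A i) →ₗ[ℂ] ((i : I) → A i))),
      (∀ k, IsNCDerivation (X k)) →
      ∀ (k : Fin p) (f : (i : I) → A i), (∀ b, f * b = b * f) →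
        ω (Function.update X k ((LinearMap.mulLeft ℂ f) ∘ₗ X k)) = f * ω X) :
    ∀ i : I, ∃ ωc : (Fin p → (A i →ₗ[ℂ] A i)) → A i,
      (∀ (Y : Fin p → (A i →ₗ[ℂ] A i)), (∀ k, IsNCDerivation (Y k)) →
        ∀ k l : Fin p, k ≠ l → ωc (fun t => Y (Equiv.swap k l t)) = - ωc Y) ∧
      (∀ (Y : Fin p → (A i →ₗ[ℂ] A i)), (∀ k, IsNCDerivation (Y k)) →
        ∀ (k : Fin p) (Z W : A i →ₗ[ℂ] A i), IsNCDerivation Z → IsNCDerivation W →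
          ωc (Function.update Y k (Z + W)) =
            ωc (Function.update Y k Z) + ωc (Function.update Y k W)) ∧
      (∀ (Y : Fin p → (A i →ₗ[ℂ] A i)), (∀ k, IsNCDerivation (Y k)) →
        ∀ (k : Fin p) (g : A i), (∀ b, g * b = b * g) →
          ωc (Function.update Y k ((LinearMap.mulLeft ℂ g) ∘ₗ Y k)) = g * ωc Y) ∧
      (∀ (X : Fin p → (((i : I) → A i) →ₗ[ℂ] ((i : I) → A i))),
        (∀ k, IsNCDerivation (X k)) →
        ∀ (Y : Fin p → (A i →ₗ[ℂ] A i)), (∀ k, IsNCDerivation (Y k)) →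
          (∀ (k : Fin p) (a : (i : I) → A i), X k a i = Y k (a i)) →
          ω X i = ωc Y) := by
  classical
  intro i
  refine ⟨fun Y => ω (fun k => extD i (Y k)) i, ?_, ?_, ?_, ?_⟩
  · -- antisymmetry
    intro Y hY k l hkl
    have := hanti (fun k => extD i (Y k)) (fun k => extD_deriv i (hY k)) k l hkl
    dsimp only
    rw [this]
    simp
  · -- additivity
    intro Y hY k Z W hZ hW
    have hext : extD (A := A) i (Z + W) = extD i Z + extD i W := by
      apply LinearMap.ext; intro a
      simp [extD, Pi.single_add]
    have hup : ∀ (V : A i →ₗ[ℂ] A i),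
        (fun t => extD i (Function.update Y k V t)) =
          Function.update (fun t => extD i (Y t)) k (extD i V) := by
      intro V; funext t
      by_cases ht : t = k
      · subst ht; simp
      · simp [Function.update_of_ne ht]
    have := hadd (fun t => extD i (Y t)) (fun t => extD_deriv i (hY t)) k
      (extD i Z) (extD i W) (extD_deriv i hZ) (extD_deriv i hW)
    dsimp only
    rw [hup (Z + W), hup Z, hup W, hext, this]
    simp
  · -- Z(A)-linearity
    intro Y hY k g hg
    set f : (j : I) → A j := Pi.single i g with hf
    have hfc : ∀ b, f * b = b * f := by
      intro b; funext j
      by_cases hj : j = i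
      · subst hj; simpa [hf] using hg (b j)
      · simp [hf, Pi.single_eq_of_ne hj]
    have hcomp : (LinearMap.mulLeft ℂ f) ∘ₗ extD i (Y k) =
        extD i ((LinearMap.mulLeft ℂ g) ∘ₗ Y k) := by
      apply LinearMap.ext; intro a
      funext j
      by_cases hj : j = i
      · subst hj; simp [extD, hf]
      · simp [extD, hf, Pi.single_eq_of_ne hj]
    have hup : (fun t => extD i (Function.update Y k ((LinearMap.mulLeft ℂ g) ∘ₗ Y k) t)) =
        Function.update (fun t => extD i (Y t)) k ((LinearMap.mulLeft ℂ f) ∘ₗ extD i (Y k)) := by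
      funext t
      by_cases ht : t = k
      · subst ht; simp [hcomp]
      · simp [Function.update_of_ne ht]
    have := hsmul (fun t => extD i (Y t)) (fun t => extD_deriv i (hY t)) k f hfc
    dsimp only
    rw [hup]
    rw [this]
    simp [hf]
  · -- compatibility
    intro X hX Y hY hcompat
    set e : (j : I) → A j := Pi.single i 1 with he
    have hec : ∀ b, e * b = b * e := by
      intro b; funext j
      by_cases hj : j = i
      · subst hj; simp [he]
      · simp [he, Pi.single_eq_of_ne hj]
    -- key claim
    have key : ∀ m, m ≤ p →
        ω (fun k : Fin p => if (k : ℕ) < m then (LinearMap.mulLeft ℂ e) ∘ₗ X k else X k) i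
          = ω X i := by
      intro m
      induction m with
      | zero => intro _; simp
      | succ m ih =>
        intro hm1
        have hm : m < p := hm1
        have ihm := ih (le_of_lt hm)
        set km : Fin p := ⟨m, hm⟩ with hkm
        set Xm : Fin p → (((j : I) → A j) →ₗ[ℂ] ((j : I) → A j)) :=
          fun k : Fin p => if (k : ℕ) < m then (LinearMap.mulLeft ℂ e) ∘ₗ X k else X k with hXm
        have hXmd : ∀ k, IsNCDerivation (Xm k) := by
          intro k
          by_cases hk : (k : ℕ) < m
          · simpa [hXm, hk] using mulLeft_comp_deriv hec (hX k)
          · simpa [hXm, hk] using hX k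
        have hXmkm : Xm km = X km := by simp [hXm, hkm]
        have hupd : Function.update Xm km ((LinearMap.mulLeft ℂ e) ∘ₗ Xm km) =
            fun k : Fin p => if (k : ℕ) < m + 1 then (LinearMap.mulLeft ℂ e) ∘ₗ X k else X k := by
          funext t
          by_cases ht : t = km
          · subst ht
            rw [Function.update_self, hXmkm]
            simp [hkm]
          · have htv : (t : ℕ) ≠ m := by
              intro h; apply ht; apply Fin.ext; simp [h, hkm]
            have : ((t : ℕ) < m + 1) ↔ ((t : ℕ) < m) := by
              omega
            simp [Function.update_of_ne ht, hXm, this]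
        have := hsmul Xm hXmd km e hec
        rw [hupd] at this
        have hcomp : (ω fun k : Fin p => if (k : ℕ) < m + 1 then (LinearMap.mulLeft ℂ e) ∘ₗ X k else X k) i
            = (e * ω Xm) i := by rw [this]
        rw [hcomp]
        have : (e * ω Xm) i = ω Xm i := by simp [he, Pi.mul_apply]
        rw [this]; exact ihm
    have hkey := key p le_rfl
    have hall : (fun k : Fin p => if (k : ℕ) < p then (LinearMap.mulLeft ℂ e) ∘ₗ X k else X k)
        = fun k => extD i (Y k) := by
      funext k
      have hk : (k : ℕ) < p := k.isLt
      simp only [hk, if_true]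
      apply LinearMap.ext; intro a
      funext j
      by_cases hj : j = i
      · subst hj
        simp [extD, he, hcompat k a]
      · simp [extD, he, Pi.single_eq_of_ne hj]
    rw [hall] at hkey
    exact hkey.symm
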